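/- Let f : ℕ → ℕ satisfy lim_{m→∞} f(m)/m = 1, and let (a_n) be a sequence of positive reals with a_n^{1/n} bounded above, such that a_n · a_m ≤ a_{n+f(m)} for all sufficiently large n and m. Then lim_{n→∞} a_n^{1/n} exists and equals limsup_{n→∞} a_n^{1/n}, which is finite. -/

import Mathlib

open Filter

/-- Wilker–Whittington strengthening of Fekete's lemma: if `f(m)/m → 1`, the
positive sequence `(a n)` satisfies `a n · a m ≤ a (n + f m)` for all
sufficiently large `n, m`, and `a n ^ (1/n)` is bounded above, then
`a n ^ (1/n)` converges, and its limit is its (finite) limit superior. -/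
theorem wilker_whittington (f : ℕ → ℕ) (a : ℕ → ℝ)
    (hf : Tendsto (fun m : ℕ => (f m : ℝ) / (m : ℝ)) atTop (nhds 1))
    (hpos : ∀ n, 0 < a n)
    (hsuper : ∃ N : ℕ, ∀ n ≥ N, ∀ m ≥ N, a n * a m ≤ a (n + f m))
    (B : ℝ) (hB : ∀ n : ℕ, a n ^ ((n : ℝ)⁻¹) ≤ B) :
    Tendsto (fun n : ℕ => a n ^ ((n : ℝ)⁻¹)) atTop
      (nhds (limsup (fun n : ℕ => a n ^ ((n : ℝ)⁻¹)) atTop)) := by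
  obtain ⟨N, hN⟩ := hsuper
  set b : ℕ → ℝ := fun n => a n ^ ((n : ℝ)⁻¹) with hbdef
  have hbpos : ∀ n, 0 < b n := fun n => Real.rpow_pos_of_pos (hpos n) _
  have hbddU : IsBoundedUnder (· ≤ ·) atTop b :=
    ⟨B, eventually_map.mpr (Eventually.of_forall hB)⟩
  have hbddL : IsBoundedUnder (· ≥ ·) atTop b :=
    ⟨0, eventually_map.mpr (Eventually.of_forall fun n => (hbpos n).le)⟩
  set L := limsup b atTop with hLdef
  rw [tendsto_order]
  constructor
  · -- lower part: ∀ c < L, eventually c < b n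
    intro c hc
    rcases le_or_gt c 0 with h0 | h0
    · exact Eventually.of_forall fun n => lt_of_le_of_lt h0 (hbpos n)
    -- 0 < c < L
    set q : ℝ := (c + L) / 2 with hqdef
    have hq1 : c < q := by rw [hqdef]; linarith
    have hq2 : q < L := by rw [hqdef]; linarith
    have hq0 : 0 < q := h0.trans hq1
    -- continuity of t ↦ q ^ t at 1
    have hcont : Tendsto (fun t : ℝ => q ^ t) (nhds 1) (nhds q) := by
      have := (Real.continuousAt_const_rpow (a := q) (b := 1) hq0.ne').tendsto
      simpa using this
    have hev : ∀ᶠ t in nhds (1 : ℝ), c < q ^ t := hcont.eventually_const_lt hq1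
    -- m / f m → 1
    have hinv : Tendsto (fun m : ℕ => ((f m : ℝ) / (m : ℝ))⁻¹) atTop (nhds 1) := by
      simpa using hf.inv₀ one_ne_zero
    have hevq : ∀ᶠ m in atTop, c < q ^ (((f m : ℝ) / (m : ℝ))⁻¹) := hinv.eventually hev
    have h12 : ∀ᶠ m in atTop, (1 : ℝ) / 2 < (f m : ℝ) / (m : ℝ) :=
      hf.eventually_const_lt (by norm_num)
    have hfm1 : ∀ᶠ m in atTop, 1 ≤ f m := by
      filter_upwards [h12, eventually_ge_atTop 1] with m hm hm1
      by_contra h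
      push_neg at h
      interval_cases h' : f m
      · simp at hm; linarith
    have hfr : ∃ᶠ m in atTop, q < b m :=
      frequently_lt_of_lt_limsup hbddL.isCoboundedUnder_le hq2
    obtain ⟨m, hmq, hmN, hm1, hmf1, hmc⟩ :=
      (hfr.and_eventually ((eventually_ge_atTop N).and
        ((eventually_ge_atTop 1).and (hfm1.and hevq)))).exists
    set p := f m with hpdef
    have hp0 : 0 < p := hmf1
    have hpR : (0 : ℝ) < (p : ℝ) := by exact_mod_cast hp0
    have hmR : (0 : ℝ) < (m : ℝ) := by exact_mod_cast hm1
    -- rewrite the exponent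
    have hemc : c < q ^ ((m : ℝ) * ((p : ℝ))⁻¹) := by
      have : ((f m : ℝ) / (m : ℝ))⁻¹ = (m : ℝ) * ((p : ℝ))⁻¹ := by
        rw [inv_div, div_eq_mul_inv]
      rwa [this] at hmc
    -- q ^ m < a m
    have hq_m : q ^ (m : ℝ) < a m := by
      have h := Real.rpow_lt_rpow hq0.le hmq hmR
      rwa [hbdef, ← Real.rpow_mul (hpos m).le, inv_mul_cancel₀ hmR.ne', Real.rpow_one] at h
    have hcA : c < a m ^ ((p : ℝ))⁻¹ := by
      calc c < q ^ ((m : ℝ) * ((p : ℝ))⁻¹) := hemc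
        _ = (q ^ (m : ℝ)) ^ ((p : ℝ))⁻¹ := Real.rpow_mul hq0.le _ _
        _ < a m ^ ((p : ℝ))⁻¹ :=
            Real.rpow_lt_rpow (Real.rpow_nonneg hq0.le _) hq_m (by positivity)
    -- key supermultiplicative iteration
    have key : ∀ k r, N ≤ r → a r * a m ^ k ≤ a (r + k * p) := by
      intro k
      induction k with
      | zero => intro r _; simp
      | succ k ih =>
        intro r hr
        have h1 : a (r + k * p) * a m ≤ a (r + k * p + p) :=
          hN _ (le_trans hr (Nat.le_add_right _ _)) m hmN
        calc a r * a m ^ (k + 1) = (a r * a m ^ k) * a m := by ring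
          _ ≤ a (r + k * p) * a m :=
              mul_le_mul_of_nonneg_right (ih r hr) (hpos m).le
          _ ≤ a (r + k * p + p) := h1
          _ = a (r + (k + 1) * p) := by congr 1; ring
    -- minimum over the residues
    have hrange : (Finset.range p).Nonempty := ⟨0, Finset.mem_range.2 hp0⟩
    set c0 : ℝ := (Finset.range p).inf' hrange (fun i => a (N + i)) with hc0def
    have hc0pos : 0 < c0 := by
      rw [hc0def, Finset.lt_inf'_iff]
      exact fun i _ => hpos _
    -- the counting function
    set k : ℕ → ℕ := fun n => (n - N) / p with hkdef
    have hlow : ∀ n, N ≤ n → c0 * a m ^ (k n) ≤ a n := by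
      intro n hn
      have hdecomp : (N + (n - N) % p) + ((n - N) / p) * p = n := by
        calc (N + (n - N) % p) + ((n - N) / p) * p
            = N + (p * ((n - N) / p) + (n - N) % p) := by ring
          _ = N + (n - N) := by rw [Nat.div_add_mod]
          _ = n := Nat.add_sub_cancel' hn
      have hmem : (n - N) % p ∈ Finset.range p := Finset.mem_range.2 (Nat.mod_lt _ hp0)
      calc c0 * a m ^ (k n) ≤ a (N + (n - N) % p) * a m ^ (k n) :=
            mul_le_mul_of_nonneg_right (Finset.inf'_le _ hmem)
              (pow_nonneg (hpos m).le _)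
        _ ≤ a ((N + (n - N) % p) + (k n) * p) := key _ _ (Nat.le_add_right _ _)
        _ = a n := by rw [hkdef]; exact congrArg a hdecomp
    -- the auxiliary lower sequence
    set ℓ : ℕ → ℝ := fun n => c0 ^ ((n : ℝ))⁻¹ * a m ^ ((k n : ℝ) * ((n : ℝ))⁻¹)
      with hldef
    have hbn : ∀ᶠ n in atTop, ℓ n ≤ b n := by
      filter_upwards [eventually_ge_atTop N] with n hn
      have h1 : (c0 * a m ^ (k n)) ^ ((n : ℝ))⁻¹ ≤ a n ^ ((n : ℝ))⁻¹ :=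
        Real.rpow_le_rpow (mul_pos hc0pos (pow_pos (hpos m) _)).le (hlow n hn)
          (by positivity)
      calc ℓ n = (c0 * a m ^ (k n)) ^ ((n : ℝ))⁻¹ := by
            rw [hldef, Real.mul_rpow hc0pos.le (pow_nonneg (hpos m).le _),
              ← Real.rpow_natCast (a m) (k n), ← Real.rpow_mul (hpos m).le]
        _ ≤ b n := h1
    -- limit of the exponents
    have hk_le : ∀ n : ℕ, 1 ≤ n → (k n : ℝ) * ((n : ℝ))⁻¹ ≤ ((p : ℝ))⁻¹ := by
      intro n hn
      have hnR : (0 : ℝ) < (n : ℝ) := by exact_mod_cast hn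
      have h1 : (k n : ℝ) * (p : ℝ) ≤ (n : ℝ) := by
        have : k n * p ≤ n := le_trans (Nat.div_mul_le_self _ _) (Nat.sub_le _ _)
        exact_mod_cast this
      have h2 : (k n : ℝ) ≤ (n : ℝ) / (p : ℝ) := (le_div_iff₀ hpR).2 h1
      calc (k n : ℝ) * ((n : ℝ))⁻¹ ≤ ((n : ℝ) / (p : ℝ)) * ((n : ℝ))⁻¹ :=
            mul_le_mul_of_nonneg_right h2 (by positivity)
        _ = ((p : ℝ))⁻¹ := by field_simp
    have hk_ge : ∀ n : ℕ, 1 ≤ n →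
        (1 - ((N : ℝ) + (p : ℝ)) * ((n : ℝ))⁻¹) / (p : ℝ) ≤ (k n : ℝ) * ((n : ℝ))⁻¹ := by
      intro n hn
      have hnR : (0 : ℝ) < (n : ℝ) := by exact_mod_cast hn
      have h1 : n ≤ N + (k n + 1) * p := by
        simp only [hkdef]
        have hlt : n - N < ((n - N) / p + 1) * p := by
          calc n - N = p * ((n - N) / p) + (n - N) % p := (Nat.div_add_mod _ _).symm
            _ < p * ((n - N) / p) + p := Nat.add_lt_add_left (Nat.mod_lt _ hp0) _
            _ = ((n - N) / p + 1) * p := by ring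
        exact (Nat.le_add_of_sub_le hlt.le).trans_eq (Nat.add_comm _ _)
      have h1R : (n : ℝ) ≤ (N : ℝ) + ((k n : ℝ) + 1) * (p : ℝ) := by exact_mod_cast h1
      have h2 : ((n : ℝ) - (N : ℝ) - (p : ℝ)) / (p : ℝ) ≤ (k n : ℝ) := by
        rw [div_le_iff₀ hpR]; nlinarith
      have h3 : (1 - ((N : ℝ) + (p : ℝ)) * ((n : ℝ))⁻¹) / (p : ℝ)
          = (((n : ℝ) - (N : ℝ) - (p : ℝ)) / (p : ℝ)) * ((n : ℝ))⁻¹ := by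
        field_simp; ring
      rw [h3]
      exact mul_le_mul_of_nonneg_right h2 (by positivity)
    have hg : Tendsto (fun n : ℕ => (1 - ((N : ℝ) + (p : ℝ)) * ((n : ℝ))⁻¹) / (p : ℝ))
        atTop (nhds (((p : ℝ))⁻¹)) := by
      have h1 : Tendsto (fun n : ℕ => 1 - ((N : ℝ) + (p : ℝ)) * ((n : ℝ))⁻¹) atTop
          (nhds 1) := by
        have := (tendsto_inv_atTop_nhds_zero_nat.const_mul ((N : ℝ) + (p : ℝ))).const_sub 1
        simpa using this
      have := h1.div_const (p : ℝ)
      simpa [one_div] using this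
    have h2 : Tendsto (fun n : ℕ => (k n : ℝ) * ((n : ℝ))⁻¹) atTop (nhds (((p : ℝ))⁻¹)) := by
      apply tendsto_of_tendsto_of_tendsto_of_le_of_le' hg tendsto_const_nhds
      · filter_upwards [eventually_ge_atTop 1] with n hn using hk_ge n hn
      · filter_upwards [eventually_ge_atTop 1] with n hn using hk_le n hn
    have h3 : Tendsto (fun n : ℕ => a m ^ ((k n : ℝ) * ((n : ℝ))⁻¹)) atTop
        (nhds (a m ^ ((p : ℝ))⁻¹)) :=
      ((Real.continuousAt_const_rpow (hpos m).ne').tendsto).comp h2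
    have h1 : Tendsto (fun n : ℕ => c0 ^ ((n : ℝ))⁻¹) atTop (nhds 1) := by
      have := ((Real.continuousAt_const_rpow (a := c0) (b := 0) hc0pos.ne').tendsto).comp
        tendsto_inv_atTop_nhds_zero_nat
      simpa [Function.comp_def] using this
    have hl : Tendsto ℓ atTop (nhds (a m ^ ((p : ℝ))⁻¹)) := by
      have := h1.mul h3
      simpa using this
    have hev2 : ∀ᶠ n in atTop, c < ℓ n := hl.eventually_const_lt hcA
    filter_upwards [hev2, hbn] with n h1 h2 using lt_of_lt_of_le h1 h2
  · intro c hc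
    exact eventually_lt_of_limsup_lt hc hbddU
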